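/- Let p ≥ 3 be an integer and δ ∈ (0,1/2) a real number. Define x := (1/2 − δ)·((1−δ)^{p−1} − δ^{p−1})/((1−δ)^p + δ^p) and ψ := p − 1 + log₂((1−δ)^p + δ^p) − (p/2)·H₂(x) − p·x·log₂(1−2δ). Then ψ ≤ (4/ln 2)·(1−2x)^{(p−1)/2} + (p/2)·H₂(x) − 1. -/

import Mathlib

lemma aux_pow_sub (u v : ℝ) (hv : 0 ≤ v) (huv : v ≤ u) (n : ℕ) :
    ((n : ℝ) + 1) * (u - v) * v ^ n ≤ u ^ (n + 1) - v ^ (n + 1) := by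
  induction n with
  | zero => simp
  | succ m ih =>
    have h1 : v ^ (m + 1) ≤ u ^ (m + 1) := pow_le_pow_left₀ hv huv (m + 1)
    have h2 : ((m : ℝ) + 1) * (u - v) * v ^ m * v ≤ (u ^ (m + 1) - v ^ (m + 1)) * v :=
      mul_le_mul_of_nonneg_right ih hv
    have h3 : 0 ≤ (u ^ (m + 1) - v ^ (m + 1)) * (u - v) :=
      mul_nonneg (by linarith) (by linarith)
    have e1 : u ^ (m + 1 + 1) = u ^ (m + 1) * u := pow_succ u (m + 1)
    have e2 : v ^ (m + 1 + 1) = v ^ (m + 1) * v := pow_succ v (m + 1)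
    have e3 : v ^ (m + 1) = v ^ m * v := pow_succ v m
    push_cast
    rw [e1, e2, e3]
    nlinarith [h2, h3, e3]

lemma tangent_line (x y : ℝ) (hx0 : 0 < x) (hx1 : x < 1) (hy0 : 0 < y) (hy1 : y < 1) :
    -(y * Real.log y) - (1 - y) * Real.log (1 - y) ≤
      -(y * Real.log x) - (1 - y) * Real.log (1 - x) := by
  have h1y : (0:ℝ) < 1 - y := by linarith
  have h1x : (0:ℝ) < 1 - x := by linarith
  have p1 : Real.log (x / y) ≤ x / y - 1 := Real.log_le_sub_one_of_pos (div_pos hx0 hy0)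
  have p2 : Real.log ((1 - x) / (1 - y)) ≤ (1 - x) / (1 - y) - 1 :=
    Real.log_le_sub_one_of_pos (div_pos h1x h1y)
  rw [Real.log_div hx0.ne' hy0.ne'] at p1
  rw [Real.log_div h1x.ne' h1y.ne'] at p2
  have q1 : y * (Real.log x - Real.log y) ≤ x - y := by
    have h := mul_le_mul_of_nonneg_left p1 hy0.le
    have he : y * (x / y - 1) = x - y := by field_simp
    linarith
  have q2 : (1 - y) * (Real.log (1 - x) - Real.log (1 - y)) ≤ y - x := by
    have h := mul_le_mul_of_nonneg_left p2 h1y.le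
    have he : (1 - y) * ((1 - x) / (1 - y) - 1) = y - x := by
      field_simp
      ring
    linarith
  nlinarith [q1, q2]

/-- The binary entropy function `H₂(x) = -x·log₂ x - (1-x)·log₂(1-x)`. -/
noncomputable def binEntropy2 (x : ℝ) : ℝ :=
  -x * Real.logb 2 x - (1 - x) * Real.logb 2 (1 - x)

set_option maxHeartbeats 2000000 in
theorem psi_bound (p : ℕ) (hp : 3 ≤ p) (δ : ℝ) (hδ : δ ∈ Set.Ioo (0 : ℝ) (1 / 2)) :
    let x : ℝ := (1 / 2 - δ) * ((1 - δ) ^ (p - 1) - δ ^ (p - 1)) / ((1 - δ) ^ p + δ ^ p)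
    let ψ : ℝ := (p : ℝ) - 1 + Real.logb 2 ((1 - δ) ^ p + δ ^ p)
      - ((p : ℝ) / 2) * binEntropy2 x - (p : ℝ) * x * Real.logb 2 (1 - 2 * δ)
    ψ ≤ (4 / Real.log 2) * (1 - 2 * x) ^ (((p : ℝ) - 1) / 2)
      + ((p : ℝ) / 2) * binEntropy2 x - 1 := by
  obtain ⟨n, rfl⟩ : ∃ n, p = n + 3 := ⟨p - 3, by omega⟩
  obtain ⟨hδ0, hδ2⟩ := hδ
  intro x ψ
  have hxdef : x = (1 / 2 - δ) * ((1 - δ) ^ (n + 2) - δ ^ (n + 2)) /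
      ((1 - δ) ^ (n + 3) + δ ^ (n + 3)) := rfl
  have hψdef : ψ = ((n + 3 : ℕ) : ℝ) - 1 + Real.logb 2 ((1 - δ) ^ (n + 3) + δ ^ (n + 3))
      - (((n + 3 : ℕ) : ℝ) / 2) * binEntropy2 x
      - ((n + 3 : ℕ) : ℝ) * x * Real.logb 2 (1 - 2 * δ) := rfl
  clear_value x ψ
  have ha0 : (0:ℝ) < 1 - δ := by linarith
  have hz0 : (0:ℝ) < 1 - 2 * δ := by linarith
  have hL2 : (0:ℝ) < Real.log 2 := Real.log_pos one_lt_two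
  have hs0 : (0:ℝ) < (1 - δ) ^ (n + 3) + δ ^ (n + 3) :=
    add_pos (pow_pos ha0 _) (pow_pos hδ0 _)
  have hA2 : (0:ℝ) < (1 - δ) ^ (n + 2) := pow_pos ha0 _
  have hB2 : (0:ℝ) < δ ^ (n + 2) := pow_pos hδ0 _
  have hA3 : (0:ℝ) < (1 - δ) ^ (n + 3) := pow_pos ha0 _
  have hB3 : (0:ℝ) < δ ^ (n + 3) := pow_pos hδ0 _
  have hB1 : (0:ℝ) < δ ^ (n + 1) := pow_pos hδ0 _
  have hA1 : (0:ℝ) < (1 - δ) ^ (n + 1) := pow_pos ha0 _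
  -- A - B ≥ (n+2)(1-2δ)δ^(n+1) > 0
  have haux : ((n + 2 : ℕ) : ℝ) * (1 - 2 * δ) * δ ^ (n + 1) ≤
      (1 - δ) ^ (n + 2) - δ ^ (n + 2) := by
    calc ((n + 2 : ℕ) : ℝ) * (1 - 2 * δ) * δ ^ (n + 1)
        = (((n + 1 : ℕ) : ℝ) + 1) * ((1 - δ) - δ) * δ ^ (n + 1) := by push_cast; ring
      _ ≤ (1 - δ) ^ (n + 1 + 1) - δ ^ (n + 1 + 1) :=
          aux_pow_sub (1 - δ) δ hδ0.le (by linarith) (n + 1)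
  have hABpos : (0:ℝ) < (1 - δ) ^ (n + 2) - δ ^ (n + 2) :=
    lt_of_lt_of_le (by positivity) haux
  have hx0 : 0 < x := by
    rw [hxdef]
    exact div_pos (mul_pos (by linarith) (by linarith)) hs0
  have h1x : 1 - x = ((1 - δ) ^ (n + 2) + δ ^ (n + 2)) /
      (2 * ((1 - δ) ^ (n + 3) + δ ^ (n + 3))) := by
    rw [hxdef]; field_simp; ring
  have hx1 : x < 1 := by
    have h : (0:ℝ) < ((1 - δ) ^ (n + 2) + δ ^ (n + 2)) /
        (2 * ((1 - δ) ^ (n + 3) + δ ^ (n + 3))) := div_pos (by linarith) (by linarith)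
    rw [← h1x] at h; linarith
  set y : ℝ := (1 - 2 * δ) / (2 * (1 - δ)) with hydef
  have hy0 : 0 < y := div_pos hz0 (by linarith)
  have h1y : 1 - y = 1 / (2 * (1 - δ)) := by
    rw [hydef]; field_simp; ring
  have hy1 : y < 1 := by
    have h : (0:ℝ) < 1 / (2 * (1 - δ)) := div_pos one_pos (by linarith)
    rw [← h1y] at h; linarith
  have hyx : y - x = (1 - 2 * δ) * δ ^ (n + 2) /
      (2 * (1 - δ) * ((1 - δ) ^ (n + 3) + δ ^ (n + 3))) := by
    rw [hydef, hxdef]; field_simp; ring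
  have hyx0 : 0 ≤ y - x := by
    rw [hyx]
    exact le_of_lt (div_pos (mul_pos hz0 hB2) (by positivity))
  have h12x : 1 - 2 * x = (1 - δ) * δ * ((1 - δ) ^ (n + 1) + δ ^ (n + 1)) /
      ((1 - δ) ^ (n + 3) + δ ^ (n + 3)) := by
    rw [hxdef]; field_simp; ring
  have h12x0 : 0 < 1 - 2 * x := by
    rw [h12x]
    exact div_pos (mul_pos (mul_pos ha0 hδ0) (by linarith)) hs0
  -- log identities
  have hρ0 : (0:ℝ) < δ / (1 - δ) := div_pos hδ0 ha0
  have hρp : (0:ℝ) < (δ / (1 - δ)) ^ (n + 3) := pow_pos hρ0 _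
  have hone : (0:ℝ) < 1 + (δ / (1 - δ)) ^ (n + 3) := by linarith
  have hlogs : Real.log ((1 - δ) ^ (n + 3) + δ ^ (n + 3)) =
      ((n + 3 : ℕ) : ℝ) * Real.log (1 - δ) + Real.log (1 + (δ / (1 - δ)) ^ (n + 3)) := by
    rw [show (1 - δ) ^ (n + 3) + δ ^ (n + 3)
        = (1 - δ) ^ (n + 3) * (1 + (δ / (1 - δ)) ^ (n + 3)) by rw [div_pow, mul_add, mul_one, mul_div_assoc', mul_div_cancel_left₀ _ hA3.ne'],
      Real.log_mul hA3.ne' hone.ne', Real.log_pow]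
  have hlogy : Real.log y = Real.log (1 - 2 * δ) - (Real.log 2 + Real.log (1 - δ)) := by
    rw [hydef, Real.log_div hz0.ne' (by positivity),
      Real.log_mul (two_ne_zero) ha0.ne']
  have hlog1y : Real.log (1 - y) = -(Real.log 2 + Real.log (1 - δ)) := by
    rw [h1y, one_div, Real.log_inv, Real.log_mul (two_ne_zero) ha0.ne']
  have htan := tangent_line x y hx0 hx1 hy0 hy1
  have hHy : -(y * Real.log y) - (1 - y) * Real.log (1 - y) + y * Real.log (1 - 2 * δ)
      = Real.log 2 + Real.log (1 - δ) := by
    rw [hlogy, hlog1y]; ring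
  have hunit : Real.log 2 + Real.log (1 - δ)
      + (x * Real.log x + (1 - x) * Real.log (1 - x)) - x * Real.log (1 - 2 * δ)
      ≤ (y - x) * (Real.log (1 - x) - Real.log x + Real.log (1 - 2 * δ)) := by
    have hexp0 : (y - x) * (Real.log (1 - x) - Real.log x + Real.log (1 - 2 * δ))
        = y * Real.log (1 - x) - y * Real.log x + y * Real.log (1 - 2 * δ)
          - x * Real.log (1 - x) + x * Real.log x - x * Real.log (1 - 2 * δ) := by ring
    linarith [htan, hHy, hexp0]
  have hsc := mul_le_mul_of_nonneg_left hunit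
    (by positivity : (0:ℝ) ≤ ((n + 3 : ℕ) : ℝ))
  have hlogratio : Real.log (1 - x) - Real.log x + Real.log (1 - 2 * δ) =
      Real.log (((1 - δ) ^ (n + 2) + δ ^ (n + 2)) / ((1 - δ) ^ (n + 2) - δ ^ (n + 2))) := by
    have harg : ((1 - δ) ^ (n + 2) + δ ^ (n + 2)) / ((1 - δ) ^ (n + 2) - δ ^ (n + 2))
        = (1 - x) * (1 - 2 * δ) / x := by
      rw [h1x, hxdef]; have := hz0.ne'; field_simp; ring_nf
      linear_combination -(inv_mul_cancel₀ (by linarith : (1:ℝ) - δ * 2 ≠ 0))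
    rw [harg, Real.log_div (ne_of_gt (mul_pos (by linarith) hz0)) hx0.ne',
      Real.log_mul (by linarith : (1:ℝ) - x ≠ 0) hz0.ne']
    ring
  rw [hlogratio] at hsc
  have hlogratio_le :
      Real.log (((1 - δ) ^ (n + 2) + δ ^ (n + 2)) / ((1 - δ) ^ (n + 2) - δ ^ (n + 2)))
      ≤ 2 * δ ^ (n + 2) / ((1 - δ) ^ (n + 2) - δ ^ (n + 2)) := by
    have h := Real.log_le_sub_one_of_pos
      (div_pos (by linarith : (0:ℝ) < (1 - δ) ^ (n + 2) + δ ^ (n + 2)) hABpos)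
    have he : ((1 - δ) ^ (n + 2) + δ ^ (n + 2)) / ((1 - δ) ^ (n + 2) - δ ^ (n + 2)) - 1
        = 2 * δ ^ (n + 2) / ((1 - δ) ^ (n + 2) - δ ^ (n + 2)) := by
      field_simp
      ring
    linarith
  have hmul2 : ((n + 3 : ℕ) : ℝ) * ((y - x) *
      Real.log (((1 - δ) ^ (n + 2) + δ ^ (n + 2)) / ((1 - δ) ^ (n + 2) - δ ^ (n + 2))))
      ≤ ((n + 3 : ℕ) : ℝ) * ((y - x) *
          (2 * δ ^ (n + 2) / ((1 - δ) ^ (n + 2) - δ ^ (n + 2)))) :=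
    mul_le_mul_of_nonneg_left (mul_le_mul_of_nonneg_left hlogratio_le hyx0) (by positivity)
  have hcoef : ((n + 3 : ℕ) : ℝ) ≤ 3 * ((n + 2 : ℕ) : ℝ) * (1 - δ) := by
    push_cast
    nlinarith [Nat.cast_nonneg (α := ℝ) n]
  have hF : ((n + 3 : ℕ) : ℝ) * ((y - x) *
      (2 * δ ^ (n + 2) / ((1 - δ) ^ (n + 2) - δ ^ (n + 2))))
      ≤ 3 * (δ / (1 - δ)) ^ (n + 3) := by
    rw [hyx]
    have lhs_eq : ((n + 3 : ℕ) : ℝ) * ((1 - 2 * δ) * δ ^ (n + 2) /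
          (2 * (1 - δ) * ((1 - δ) ^ (n + 3) + δ ^ (n + 3))) *
        (2 * δ ^ (n + 2) / ((1 - δ) ^ (n + 2) - δ ^ (n + 2))))
        = (((n + 3 : ℕ) : ℝ) * (1 - 2 * δ) * δ ^ (n + 2) * δ ^ (n + 2)) /
          ((1 - δ) * ((1 - δ) ^ (n + 3) + δ ^ (n + 3)) *
            ((1 - δ) ^ (n + 2) - δ ^ (n + 2))) := by
      field_simp
    rw [lhs_eq, show (3:ℝ) * (δ / (1 - δ)) ^ (n + 3)
        = 3 * δ ^ (n + 3) / (1 - δ) ^ (n + 3) by rw [div_pow]; ring,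
      div_le_div_iff₀ (by positivity) hA3]
    have hm1 : ((n + 2 : ℕ) : ℝ) * (1 - 2 * δ) * δ ^ (n + 1) * (1 - δ) ^ (n + 3)
        ≤ ((1 - δ) ^ (n + 2) - δ ^ (n + 2)) * ((1 - δ) ^ (n + 3) + δ ^ (n + 3)) :=
      mul_le_mul haux (by linarith) hA3.le hABpos.le
    calc ((n + 3 : ℕ) : ℝ) * (1 - 2 * δ) * δ ^ (n + 2) * δ ^ (n + 2) * (1 - δ) ^ (n + 3)
        = ((n + 3 : ℕ) : ℝ) * ((1 - 2 * δ) * δ ^ (n + 2) * δ ^ (n + 2) * (1 - δ) ^ (n + 3)) := by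
          ring
      _ ≤ (3 * ((n + 2 : ℕ) : ℝ) * (1 - δ)) *
            ((1 - 2 * δ) * δ ^ (n + 2) * δ ^ (n + 2) * (1 - δ) ^ (n + 3)) := by
          apply mul_le_mul_of_nonneg_right hcoef
          positivity
      _ = 3 * δ ^ (n + 3) * (1 - δ) *
            (((n + 2 : ℕ) : ℝ) * (1 - 2 * δ) * δ ^ (n + 1) * (1 - δ) ^ (n + 3)) := by
          ring
      _ ≤ 3 * δ ^ (n + 3) * (1 - δ) *
            (((1 - δ) ^ (n + 2) - δ ^ (n + 2)) * ((1 - δ) ^ (n + 3) + δ ^ (n + 3))) := by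
          apply mul_le_mul_of_nonneg_left hm1
          positivity
      _ = 3 * δ ^ (n + 3) * ((1 - δ) * ((1 - δ) ^ (n + 3) + δ ^ (n + 3)) *
            ((1 - δ) ^ (n + 2) - δ ^ (n + 2))) := by ring
  have hlog1r : Real.log (1 + (δ / (1 - δ)) ^ (n + 3)) ≤ (δ / (1 - δ)) ^ (n + 3) := by
    have h := Real.log_le_sub_one_of_pos hone
    linarith
  have hN : ((n + 3 : ℕ) : ℝ) * Real.log 2 + Real.log ((1 - δ) ^ (n + 3) + δ ^ (n + 3))
      + ((n + 3 : ℕ) : ℝ) * (x * Real.log x + (1 - x) * Real.log (1 - x))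
      - ((n + 3 : ℕ) : ℝ) * (x * Real.log (1 - 2 * δ))
      ≤ 4 * (δ / (1 - δ)) ^ (n + 3) := by
    have hexp : ((n + 3 : ℕ) : ℝ) * (Real.log 2 + Real.log (1 - δ)
        + (x * Real.log x + (1 - x) * Real.log (1 - x)) - x * Real.log (1 - 2 * δ))
        = ((n + 3 : ℕ) : ℝ) * Real.log 2 + ((n + 3 : ℕ) : ℝ) * Real.log (1 - δ)
        + ((n + 3 : ℕ) : ℝ) * (x * Real.log x + (1 - x) * Real.log (1 - x))
        - ((n + 3 : ℕ) : ℝ) * (x * Real.log (1 - 2 * δ)) := by ring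
    rw [hexp] at hsc
    linarith [hsc, hmul2, hF, hlog1r, hlogs]
  -- from 4ρ^p to 4(1-2x)^((p-1)/2)
  have hρ1 : δ / (1 - δ) < 1 := (div_lt_one ha0).mpr (by linarith)
  have hρx : δ / (1 - δ) ≤ 1 - 2 * x := by
    rw [h12x, div_le_div_iff₀ ha0 hs0]
    have hsq : δ ^ 2 ≤ (1 - δ) ^ 2 := by nlinarith
    have key : δ ^ (n + 3) ≤ (1 - δ) ^ 2 * δ ^ (n + 1) := by
      calc δ ^ (n + 3) = δ ^ 2 * δ ^ (n + 1) := by ring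
        _ ≤ (1 - δ) ^ 2 * δ ^ (n + 1) := mul_le_mul_of_nonneg_right hsq hB1.le
    have key2 := mul_le_mul_of_nonneg_left key hδ0.le
    have hre : δ * ((1 - δ) ^ (n + 3) + δ ^ (n + 3))
        = δ * (1 - δ) ^ 2 * (1 - δ) ^ (n + 1) + δ * δ ^ (n + 3) := by ring
    have hre2 : (1 - δ) * δ * ((1 - δ) ^ (n + 1) + δ ^ (n + 1)) * (1 - δ)
        = δ * (1 - δ) ^ 2 * (1 - δ) ^ (n + 1) + δ * ((1 - δ) ^ 2 * δ ^ (n + 1)) := by ring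
    rw [hre, hre2]
    linarith [key2]
  have hchain : 4 * (δ / (1 - δ)) ^ (n + 3)
      ≤ 4 * (1 - 2 * x) ^ ((((n + 3 : ℕ) : ℝ) - 1) / 2) := by
    have e1 : (δ / (1 - δ)) ^ (n + 3) = (δ / (1 - δ)) ^ (((n + 3 : ℕ) : ℝ)) :=
      (Real.rpow_natCast _ _).symm
    have e2 : (δ / (1 - δ)) ^ (((n + 3 : ℕ) : ℝ))
        ≤ (δ / (1 - δ)) ^ ((((n + 3 : ℕ) : ℝ) - 1) / 2) := by
      apply Real.rpow_le_rpow_of_exponent_ge hρ0 hρ1.le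
      push_cast
      linarith [Nat.cast_nonneg (α := ℝ) n]
    have e3 : (δ / (1 - δ)) ^ ((((n + 3 : ℕ) : ℝ) - 1) / 2)
        ≤ (1 - 2 * x) ^ ((((n + 3 : ℕ) : ℝ) - 1) / 2) := by
      apply Real.rpow_le_rpow hρ0.le hρx
      push_cast
      linarith [Nat.cast_nonneg (α := ℝ) n]
    rw [e1]
    linarith [e2, e3]
  -- endgame
  rw [hψdef]
  have hgoal_id : (4 / Real.log 2) * (1 - 2 * x) ^ ((((n + 3 : ℕ) : ℝ) - 1) / 2)
      + (((n + 3 : ℕ) : ℝ) / 2) * binEntropy2 x - 1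
      - (((n + 3 : ℕ) : ℝ) - 1 + Real.logb 2 ((1 - δ) ^ (n + 3) + δ ^ (n + 3))
        - (((n + 3 : ℕ) : ℝ) / 2) * binEntropy2 x
        - ((n + 3 : ℕ) : ℝ) * x * Real.logb 2 (1 - 2 * δ))
      = (4 * (1 - 2 * x) ^ ((((n + 3 : ℕ) : ℝ) - 1) / 2)
        - (((n + 3 : ℕ) : ℝ) * Real.log 2 + Real.log ((1 - δ) ^ (n + 3) + δ ^ (n + 3))
          + ((n + 3 : ℕ) : ℝ) * (x * Real.log x + (1 - x) * Real.log (1 - x))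
          - ((n + 3 : ℕ) : ℝ) * (x * Real.log (1 - 2 * δ)))) / Real.log 2 := by
    simp only [binEntropy2, Real.logb]
    field_simp
    ring
  have hnonneg : 0 ≤ (4 * (1 - 2 * x) ^ ((((n + 3 : ℕ) : ℝ) - 1) / 2)
      - (((n + 3 : ℕ) : ℝ) * Real.log 2 + Real.log ((1 - δ) ^ (n + 3) + δ ^ (n + 3))
        + ((n + 3 : ℕ) : ℝ) * (x * Real.log x + (1 - x) * Real.log (1 - x))
        - ((n + 3 : ℕ) : ℝ) * (x * Real.log (1 - 2 * δ)))) / Real.log 2 :=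
    div_nonneg (by linarith [hN, hchain]) hL2.le
  linarith [hgoal_id, hnonneg]
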